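/- Let a_1, a_2, a_3 > 0, let A_3 be the diagonal matrix with these diagonal entries, and let C_3 be the periodic chain matrix for n = 3. Then det(A_3C_3 − λ I_3) = −λ (λ² − 2(a_1+a_2+a_3)λ + 3(a_1a_2+a_1a_3+a_2a_3)), and both roots of the quadratic factor λ² − 2(a_1+a_2+a_3)λ + 3(a_1a_2+a_1a_3+a_2a_3) are real and positive. -/

import Mathlib

open Matrix Polynomial

/-- The periodic chain matrix `C_n`: `2` on the diagonal, `-1` at positions
`(i, i+1)` and `(i, i-1)` with indices modulo `n`, and `0` elsewhere. -/
def pchain (n : ℕ) [NeZero n] : Matrix (Fin n) (Fin n) ℝ :=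
  Matrix.of fun i j => if i = j then 2 else if j = i + 1 ∨ i = j + 1 then -1 else 0

theorem stmt4 (a1 a2 a3 : ℝ) (h1 : 0 < a1) (h2 : 0 < a2) (h3 : 0 < a3) :
    (∀ lam : ℝ,
      (Matrix.diagonal ![a1, a2, a3] * pchain 3 - lam • (1 : Matrix (Fin 3) (Fin 3) ℝ)).det =
        -lam * (lam ^ 2 - 2 * (a1 + a2 + a3) * lam + 3 * (a1 * a2 + a1 * a3 + a2 * a3))) ∧
    ∃ r1 r2 : ℝ, 0 < r1 ∧ 0 < r2 ∧ ∀ lam : ℝ,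
      lam ^ 2 - 2 * (a1 + a2 + a3) * lam + 3 * (a1 * a2 + a1 * a3 + a2 * a3) =
        (lam - r1) * (lam - r2) := by
  constructor
  · intro lam
    rw [Matrix.det_fin_three]
    simp [pchain, Matrix.mul_apply, Fin.sum_univ_three, Matrix.diagonal,
      Matrix.one_apply]
    ring
  · set s := a1 + a2 + a3 with hs
    set p := a1 * a2 + a1 * a3 + a2 * a3 with hp
    have hd : 0 ≤ s ^ 2 - 3 * p := by nlinarith [sq_nonneg (a1 - a2), sq_nonneg (a1 - a3), sq_nonneg (a2 - a3)]
    have hsq : Real.sqrt (s ^ 2 - 3 * p) ^ 2 = s ^ 2 - 3 * p := Real.sq_sqrt hd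
    have hps : 0 < p := by positivity
    have hss : 0 < s := by positivity
    have hlt : Real.sqrt (s ^ 2 - 3 * p) < s := by
      nlinarith [Real.sqrt_nonneg (s ^ 2 - 3 * p)]
    refine ⟨s + Real.sqrt (s ^ 2 - 3 * p), s - Real.sqrt (s ^ 2 - 3 * p), ?_, by linarith, ?_⟩
    · have := Real.sqrt_nonneg (s ^ 2 - 3 * p); linarith
    · intro lam; nlinarith [hsq]
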